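/- A T-quasigroup x·y = φx + ψy + c over a finite abelian group (Q,+) is orthogonal to its (23)-parastrophe if and only if the map 1 + ψ (i.e. x ↦ x + ψx) is a bijection of Q. -/

import Mathlib

/-- A T-quasigroup x·y = φx + ψy + c over a finite abelian group is orthogonal
to its (23)-parastrophe iff the map x ↦ x + ψx is a bijection of Q. -/
theorem T_quasigroup_orth_23_iff {Q : Type*} [AddCommGroup Q] [Fintype Q]
    (φ ψ : AddAut Q) (c : Q)
    (mul ld : Q → Q → Q)
    (hmul : ∀ x y : Q, mul x y = φ x + ψ y + c)
    (hld : ∀ x y : Q, ld x y = -((-ψ) (φ x)) + (-ψ) y - (-ψ) c) :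
    (∀ a b : Q, ∃! p : Q × Q, mul p.1 p.2 = a ∧ ld p.1 p.2 = b) ↔
      Function.Bijective (fun x : Q => x + ψ x) := by
  constructor
  · intro h
    rw [← Finite.surjective_iff_bijective]
    intro t
    obtain ⟨⟨x, y⟩, ⟨h1, h2⟩, _⟩ := h t 0
    rw [hmul] at h1
    rw [hld] at h2
    have h2' := congrArg ψ h2
    simp only [map_add, map_neg, map_sub, AddAut.apply_neg_self, map_zero] at h2'
    refine ⟨y, ?_⟩
    calc y + ψ y = (φ x + ψ y + c) + (-(φ x) + y - c) := by abel
    _ = t + 0 := by rw [h1, h2']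
    _ = t := by abel
  · intro hb a b
    obtain ⟨y, hy⟩ := hb.2 (a + ψ b)
    simp only at hy
    refine ⟨((-φ) (y - c - ψ b), y), ⟨?_, ?_⟩, ?_⟩
    · rw [hmul]
      simp only [AddAut.apply_neg_self]
      calc y - c - ψ b + ψ y + c = (y + ψ y) - ψ b := by abel
      _ = a + ψ b - ψ b := by rw [hy]
      _ = a := by abel
    · rw [hld]
      simp only [AddAut.inv_apply_self, map_sub, AddAut.apply_inv_self]
      abel
    · rintro ⟨x', y'⟩ ⟨h1, h2⟩
      rw [hmul] at h1
      rw [hld] at h2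
      have h2' := congrArg ψ h2
      simp only [map_add, map_neg, map_sub, AddAut.apply_neg_self] at h2'
      have hy' : y' + ψ y' = a + ψ b := by
        calc y' + ψ y' = (φ x' + ψ y' + c) + (-(φ x') + y' - c) := by abel
        _ = a + ψ b := by rw [h1, h2']
      have hyy : y' = y := hb.1 (by simp only [hy, hy'])
      have hx : φ x' = y - c - ψ b := by
        have : -(φ x') + y' - c = ψ b := h2'
        rw [hyy] at this
        calc φ x' = -((-(φ x') + y - c)) + y - c := by abel
        _ = -(ψ b) + y - c := by rw [this]
        _ = y - c - ψ b := by abel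
      have hxx : x' = (-φ) (y - c - ψ b) := by
        rw [← hx]; simp
      exact Prod.ext hxx hyy
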